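/- arXiv:2010.05231 — 3 statements merged into one kernel-verified Lean document; each statement's English description precedes it below -/
import Mathlib

section
/- Let g : {1,2,...} → ℚ be a function with g(1) = 1. Then in the ring of formal power series in T over the polynomial ring ℚ[x], one has the identity ∑_{n=0}^∞ P_n^{g,id}(x) T^n = exp( x · ∑_{n=1}^∞ (g(n)/n) T^n ). -/
/-- The polynomials `P_n^{g,h}` defined by `P_0 = 1` and
`P_n(x) = (x / h(n)) * ∑_{k=1}^n g(k) P_{n-k}(x)` for `n ≥ 1`. -/
noncomputable def HVP (g h : ℕ → ℚ) : ℕ → Polynomial ℚ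
  | 0 => 1
  | (n + 1) =>
      Polynomial.C (h (n + 1))⁻¹ * Polynomial.X *
        ∑ k ∈ (Finset.Icc 1 (n + 1)).attach, Polynomial.C (g k.1) * HVP g h (n + 1 - k.1)
  decreasing_by
    have := (Finset.mem_Icc.mp k.2).1
    omega

/-- The formal exponential of a power series (intended for series with zero constant
term, for which `f ^ k` contributes to the `n`-th coefficient only when `k ≤ n`):
`exp f = ∑_k f^k / k!`. -/
noncomputable def psExp (f : PowerSeries (Polynomial ℚ)) : PowerSeries (Polynomial ℚ) :=
  PowerSeries.mk fun n =>
    ∑ k ∈ Finset.range (n + 1),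
      Polynomial.C ((Nat.factorial k : ℚ))⁻¹ * PowerSeries.coeff n (f ^ k)

open PowerSeries Finset

private lemma coeff_pow_zero {f : PowerSeries (Polynomial ℚ)}
    (hf : constantCoeff f = 0) {n k : ℕ} (h : n < k) :
    coeff n (f ^ k) = 0 := by
  have hd : (X : PowerSeries (Polynomial ℚ)) ∣ f := X_dvd_iff.mpr hf
  exact X_pow_dvd_iff.mp (pow_dvd_pow_of_dvd hd k) n h

/-- coefficient of `psExp` extended over larger range -/
private lemma coeff_psExp_eq {f : PowerSeries (Polynomial ℚ)}
    (hf : constantCoeff f = 0) {n N : ℕ} (hN : n + 1 ≤ N) :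
    coeff n (psExp f) =
      ∑ k ∈ Finset.range N,
        Polynomial.C ((Nat.factorial k : ℚ))⁻¹ * coeff n (f ^ k) := by
  rw [psExp, coeff_mk]
  refine Finset.sum_subset (Finset.range_subset_range.mpr hN) fun k _ hk => ?_
  rw [coeff_pow_zero hf (by simpa using hk), mul_zero]

private lemma dpow (f : PowerSeries (Polynomial ℚ)) :
    ∀ k : ℕ, (d⁄dX (Polynomial ℚ)) (f ^ (k + 1)) =
      (k + 1) • (f ^ k * (d⁄dX (Polynomial ℚ)) f) := by
  have hd : ∀ φ : PowerSeries (Polynomial ℚ),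
      (d⁄dX (Polynomial ℚ)) φ = PowerSeries.derivativeFun φ := fun _ => rfl
  intro k
  induction k with
  | zero => simp
  | succ k ih =>
    have h2 : f ^ (k + 2) = f * f ^ (k + 1) := by ring
    rw [h2, hd, PowerSeries.derivativeFun_mul, ← hd, ← hd, ih]
    simp only [smul_eq_mul, nsmul_eq_mul]
    push_cast
    ring

/-- The key differential recursion for `psExp`. -/
private lemma psExp_rec {f : PowerSeries (Polynomial ℚ)}
    (hf : constantCoeff f = 0) (n : ℕ) :
    ((n + 1 : ℕ) : Polynomial ℚ) * coeff (n + 1) (psExp f) =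
      ∑ p ∈ antidiagonal n,
        coeff p.1 (psExp f) *
          (coeff (p.2 + 1) f * ((p.2 + 1 : ℕ) : Polynomial ℚ)) := by
  rw [coeff_psExp_eq hf (le_refl (n + 2)), Finset.mul_sum]
  have step1 : ∀ k ∈ Finset.range (n + 2),
      ((n + 1 : ℕ) : Polynomial ℚ) *
        (Polynomial.C ((Nat.factorial k : ℚ))⁻¹ * coeff (n + 1) (f ^ k)) =
      Polynomial.C ((Nat.factorial k : ℚ))⁻¹ *
        coeff n ((d⁄dX (Polynomial ℚ)) (f ^ k)) := by
    intro k _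
    rw [coeff_derivative]
    push_cast
    ring
  rw [Finset.sum_congr rfl step1]
  rw [Finset.sum_range_succ' (fun k => Polynomial.C ((Nat.factorial k : ℚ))⁻¹ *
        coeff n ((d⁄dX (Polynomial ℚ)) (f ^ k)))]
  simp only [pow_zero, Derivation.map_one_eq_zero, map_zero, mul_zero, add_zero]
  have step2 : ∀ j ∈ Finset.range (n + 1),
      Polynomial.C ((Nat.factorial (j + 1) : ℚ))⁻¹ *
        coeff n ((d⁄dX (Polynomial ℚ)) (f ^ (j + 1))) =
      Polynomial.C ((Nat.factorial j : ℚ))⁻¹ *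
        coeff n (f ^ j * (d⁄dX (Polynomial ℚ)) f) := by
    intro j _
    rw [dpow, map_nsmul, nsmul_eq_mul, ← mul_assoc]
    congr 1
    rw [← Polynomial.C_eq_natCast, ← Polynomial.C_mul]
    congr 1
    rw [Nat.factorial_succ]
    push_cast
    rw [mul_inv]
    field_simp
  rw [Finset.sum_congr rfl step2]
  have step3 : ∀ j ∈ Finset.range (n + 1),
      Polynomial.C ((Nat.factorial j : ℚ))⁻¹ *
        coeff n (f ^ j * (d⁄dX (Polynomial ℚ)) f) =
      ∑ p ∈ antidiagonal n,
        Polynomial.C ((Nat.factorial j : ℚ))⁻¹ * coeff p.1 (f ^ j) *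
          coeff p.2 ((d⁄dX (Polynomial ℚ)) f) := by
    intro j _
    rw [PowerSeries.coeff_mul, Finset.mul_sum]
    exact Finset.sum_congr rfl fun p _ => by ring
  rw [Finset.sum_congr rfl step3, Finset.sum_comm]
  refine Finset.sum_congr rfl fun p hp => ?_
  have hp1 : p.1 ≤ n := by
    have := Finset.HasAntidiagonal.mem_antidiagonal.mp hp
    omega
  rw [← Finset.sum_mul, ← coeff_psExp_eq hf (by omega : p.1 + 1 ≤ n + 1), coeff_derivative]
  push_cast
  ring

theorem coeff_zero_psExp (f : PowerSeries (Polynomial ℚ)) :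
    coeff 0 (psExp f) = 1 := by
  simp [psExp, Nat.factorial]

/-- `∑_{n≥0} P_n^{g,id}(x) T^n = exp (x · ∑_{n≥1} (g(n)/n) T^n)` in `ℚ[x][[T]]`. -/
theorem exp_generating_series (g : ℕ → ℚ) (hg1 : g 1 = 1) :
    PowerSeries.mk (fun n => HVP g (fun k => (k : ℚ)) n)
      = psExp (PowerSeries.C Polynomial.X *
          PowerSeries.mk fun n => if n = 0 then 0 else Polynomial.C (g n / (n : ℚ))) := by
  set f : PowerSeries (Polynomial ℚ) := PowerSeries.C Polynomial.X *
          PowerSeries.mk fun n => if n = 0 then 0 else Polynomial.C (g n / (n : ℚ)) with hf_def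
  have hf : constantCoeff f = 0 := by
    simp [hf_def]
  have hcf : ∀ m : ℕ, coeff (m + 1) f * ((m + 1 : ℕ) : Polynomial ℚ)
      = Polynomial.X * Polynomial.C (g (m + 1)) := by
    intro m
    rw [hf_def, PowerSeries.coeff_C_mul, coeff_mk]
    simp only [Nat.add_one_ne_zero, if_false]
    rw [← Polynomial.C_eq_natCast, mul_assoc, ← Polynomial.C_mul]
    congr 2
    rw [div_mul_eq_mul_div, mul_div_assoc, div_self (by push_cast; positivity), mul_one]
  have main : ∀ n, HVP g (fun k => (k : ℚ)) n = coeff n (psExp f) := by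
    intro n
    induction n using Nat.strong_induction_on with
    | _ n ih =>
      match n with
      | 0 =>
        rw [coeff_zero_psExp, HVP]
      | (n + 1) =>
        have hrec := psExp_rec hf n
        have hrec' : ((n + 1 : ℕ) : Polynomial ℚ) * coeff (n + 1) (psExp f) =
            Polynomial.X * ∑ k ∈ Finset.Icc 1 (n + 1),
              Polynomial.C (g k) * HVP g (fun k => (k : ℚ)) (n + 1 - k) := by
          rw [hrec, Finset.Nat.sum_antidiagonal_eq_sum_range_succ_mk, Finset.mul_sum]
          refine Finset.sum_nbij' (fun i => n + 1 - i) (fun k => n + 1 - k) ?_ ?_ ?_ ?_ ?_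
          · intro i hi; simp only [Finset.mem_range] at hi; simp only [Finset.mem_Icc]; omega
          · intro k hk; simp only [Finset.mem_Icc] at hk; simp only [Finset.mem_range]; omega
          · intro i hi; simp only [Finset.mem_range] at hi; omega
          · intro k hk; simp only [Finset.mem_Icc] at hk; omega
          · intro i hi
            simp only [Finset.mem_range] at hi
            dsimp only
            rw [hcf (n - i)]
            have h1 : n - i + 1 = n + 1 - i := by omega
            have h2 : n + 1 - (n + 1 - i) = i := by omega
            rw [h1, h2, ih i (by omega)]
            ring
        have hHVP : ((n + 1 : ℕ) : Polynomial ℚ) * HVP g (fun k => (k : ℚ)) (n + 1) =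
            Polynomial.X * ∑ k ∈ Finset.Icc 1 (n + 1),
              Polynomial.C (g k) * HVP g (fun k => (k : ℚ)) (n + 1 - k) := by
          rw [HVP]
          rw [Finset.sum_attach (Finset.Icc 1 (n + 1))
            (fun k => Polynomial.C (g k) * HVP g (fun k => (k : ℚ)) (n + 1 - k))]
          rw [← mul_assoc, ← mul_assoc, ← Polynomial.C_eq_natCast, ← Polynomial.C_mul]
          rw [mul_inv_cancel₀ (by push_cast; positivity : ((n + 1 : ℕ) : ℚ) ≠ 0)]
          rw [Polynomial.C_1, one_mul]
        have hcancel : ((n + 1 : ℕ) : Polynomial ℚ) ≠ 0 := by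
          rw [← Polynomial.C_eq_natCast]
          simp only [ne_eq, Polynomial.C_eq_zero]
          push_cast; positivity
        exact mul_left_cancel₀ hcancel (hHVP.trans hrec'.symm)
  ext n
  rw [coeff_mk, main n]
end

section
/- Let g : {1,2,...} → ℚ be a function with g(1) = 1, and let E_g(T) = ∑_{n=1}^∞ (g(n)/n) T^n as a formal power series over ℚ. Then for every m ≥ 1: E_g(T)^m = m! · ∑_{n=m}^∞ A_{n,m}^{g,id} T^n, and also E_g(T)^m = ∑_{n=m}^∞ A_{n,m}^{g̃,1} T^n. -/
lemma HVP_succ (g h : ℕ → ℚ) (n : ℕ) :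
    HVP g h (n+1) = Polynomial.C (h (n+1))⁻¹ * Polynomial.X *
      ∑ k ∈ Finset.Icc 1 (n+1), Polynomial.C (g k) * HVP g h (n+1-k) := by
  rw [HVP]
  congr 1
  exact Finset.sum_attach _ (fun k => Polynomial.C (g k) * HVP g h (n+1-k))

lemma HVP_coeff_zero (g h : ℕ → ℚ) (n : ℕ) :
    (HVP g h n).coeff 0 = if n = 0 then 1 else 0 := by
  cases n with
  | zero => simp [HVP]
  | succ n => simp [HVP_succ, Polynomial.mul_coeff_zero]

lemma HVP_coeff_succ (g h : ℕ → ℚ) (n m : ℕ) :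
    (HVP g h (n+1)).coeff (m+1)
      = (h (n+1))⁻¹ * ∑ k ∈ Finset.Icc 1 (n+1), g k * (HVP g h (n+1-k)).coeff m := by
  rw [HVP_succ, mul_assoc, Polynomial.coeff_C_mul, Polynomial.coeff_X_mul,
    Polynomial.finset_sum_coeff]
  simp [Polynomial.coeff_C_mul]

lemma sum_Icc_one (f : ℕ → ℚ) : ∀ n : ℕ,
    ∑ k ∈ Finset.Icc 1 (n+1), f k = ∑ i ∈ Finset.range (n+1), f (i+1)
  | 0 => by simp
  | (n+1) => by
      rw [Finset.sum_Icc_succ_top (by omega), Finset.sum_range_succ, sum_Icc_one f n]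

lemma pow_eq_geom (g : ℕ → ℚ) (m : ℕ) :
    (PowerSeries.mk fun n => if n = 0 then 0 else g n / n) ^ m
      = PowerSeries.mk (fun n => (HVP (fun k => g k / k) (fun _ => 1) n).coeff m) := by
  induction m with
  | zero =>
    ext n
    simp only [pow_zero, PowerSeries.coeff_one, PowerSeries.coeff_mk, HVP_coeff_zero]
  | succ m ih =>
    rw [pow_succ, mul_comm, ih]
    ext n
    rw [PowerSeries.coeff_mul]
    cases n with
    | zero =>
      simp [HVP, Polynomial.coeff_one]
    | succ n =>
      rw [Finset.Nat.sum_antidiagonal_eq_sum_range_succ_mk]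
      rw [Finset.sum_range_succ']
      simp only [PowerSeries.coeff_mk]
      rw [HVP_coeff_succ, sum_Icc_one, inv_one, one_mul]
      simp only [if_true, if_false, zero_mul, add_zero, Nat.succ_ne_zero, if_neg,
        Nat.add_eq_zero, one_ne_zero, and_false]

lemma pow_eq_exp (g : ℕ → ℚ) (m : ℕ) :
    (PowerSeries.mk fun n => if n = 0 then 0 else g n / n) ^ m
      = PowerSeries.mk (fun n =>
          (Nat.factorial m : ℚ) * (HVP g (fun k => (k : ℚ)) n).coeff m) := by
  induction m with
  | zero =>
    ext n
    simp only [pow_zero, PowerSeries.coeff_one, PowerSeries.coeff_mk, HVP_coeff_zero,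
      Nat.factorial_zero, Nat.cast_one, one_mul]
  | succ m ih =>
    set E : PowerSeries ℚ := PowerSeries.mk fun n => if n = 0 then 0 else g n / n with hE
    have hdE : PowerSeries.derivative ℚ E = PowerSeries.mk fun k => g (k+1) := by
      ext k
      rw [PowerSeries.coeff_derivative]
      simp only [hE, PowerSeries.coeff_mk, Nat.succ_ne_zero, if_false]
      rw [Nat.cast_add, Nat.cast_one, div_mul_cancel₀]
      positivity
    have hleib : PowerSeries.derivative ℚ (E ^ (m+1))
        = ((m+1) : ℕ) • ((PowerSeries.mk fun n =>
            (Nat.factorial m : ℚ) * (HVP g (fun k => (k : ℚ)) n).coeff m)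
            * PowerSeries.mk fun k => g (k+1)) := by
      rw [Derivation.leibniz_pow, hdE, Nat.add_sub_cancel, ih, smul_eq_mul]
    ext n
    cases n with
    | zero =>
      rw [PowerSeries.coeff_zero_eq_constantCoeff, map_pow]
      simp [hE, HVP, zero_pow, Polynomial.coeff_one]
    | succ n =>
      have hn : ((n : ℚ) + 1) ≠ 0 := by positivity
      apply mul_left_cancel₀ hn
      have hder : (PowerSeries.coeff n) (PowerSeries.derivative ℚ (E ^ (m+1)))
          = ((n:ℚ)+1) * (PowerSeries.coeff (n+1)) (E^(m+1)) := by
        rw [PowerSeries.coeff_derivative]; ring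
      rw [← hder, hleib]
      have hsum : ∑ k ∈ Finset.range (n+1),
          ((m.factorial : ℚ) * (HVP g (fun k => (k:ℚ)) k).coeff m) * g (n - k + 1)
          = ∑ i ∈ Finset.range (n+1),
            g (i+1) * ((m.factorial : ℚ) * (HVP g (fun k => (k:ℚ)) (n - i)).coeff m) := by
        rw [← Finset.sum_range_reflect]
        apply Finset.sum_congr rfl
        intro j hj
        have hj' : j ≤ n := by simpa [Nat.lt_succ_iff] using hj
        have e1 : n + 1 - 1 - j = n - j := by omega
        have e2 : n - (n - j) = j := by omega
        rw [e1, e2]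
        ring
      rw [map_nsmul, PowerSeries.coeff_mul, Finset.Nat.sum_antidiagonal_eq_sum_range_succ_mk]
      simp only [PowerSeries.coeff_mk]
      rw [HVP_coeff_succ, sum_Icc_one, hsum]
      simp only [Nat.succ_sub_succ_eq_sub, nsmul_eq_mul]
      rw [Finset.mul_sum, Finset.mul_sum, Finset.mul_sum, Finset.mul_sum]
      apply Finset.sum_congr rfl
      intro i _
      have h1 : (((n:ℚ) + 1)) ≠ 0 := hn
      push_cast [Nat.factorial_succ]
      field_simp


/-- For `m ≥ 1`, with `E_g(T) = ∑_{n≥1} (g(n)/n) T^n`: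
`E_g(T)^m = m! · ∑_{n≥m} A_{n,m}^{g,id} T^n` and `E_g(T)^m = ∑_{n≥m} A_{n,m}^{g̃,1} T^n`
(the coefficients `A_{n,m}` vanish for `n < m`). -/
theorem eichler_power_coefficients (g : ℕ → ℚ) (hg1 : g 1 = 1) (m : ℕ) (hm : 1 ≤ m) :
    (PowerSeries.mk fun n => if n = 0 then 0 else g n / (n : ℚ)) ^ m
        = PowerSeries.mk (fun n =>
            (Nat.factorial m : ℚ) * (HVP g (fun k => (k : ℚ)) n).coeff m) ∧
    (PowerSeries.mk fun n => if n = 0 then 0 else g n / (n : ℚ)) ^ m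
        = PowerSeries.mk (fun n =>
            (HVP (fun k => g k / (k : ℚ)) (fun _ => 1) n).coeff m) :=
  ⟨pow_eq_exp g m, pow_eq_geom g m⟩
end

section
/- Let g, h : {1,2,...} → ℤ be functions with g(1) = h(1) = 1 and g(n) ≥ 1, h(n) ≥ 1 for all n. Then for all 1 ≤ m ≤ n, the rational number (∏_{k=1}^n h(k)) · A_{n,m}^{g,h} is a positive integer. -/
lemma HVP_key (g h : ℕ → ℤ) (hg : ∀ n, 1 ≤ n → 1 ≤ g n) (hh : ∀ n, 1 ≤ n → 1 ≤ h n) :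
    ∀ n m : ℕ,
      (1 ≤ m → m ≤ n → ∃ z : ℤ, 0 < z ∧
        (∏ k ∈ Finset.Icc 1 n, (h k : ℚ)) *
          (HVP (fun k => (g k : ℚ)) (fun k => (h k : ℚ)) n).coeff m = (z : ℚ))
      ∧ ((m = 0 ∧ 1 ≤ n) ∨ n < m →
        (HVP (fun k => (g k : ℚ)) (fun k => (h k : ℚ)) n).coeff m = 0) := by
  set G : ℕ → ℚ := fun k => (g k : ℚ) with hG
  set H : ℕ → ℚ := fun k => (h k : ℚ) with hH
  have Hpos : ∀ k, 1 ≤ k → 0 < H k := fun k hk => by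
    simp only [hH]; exact_mod_cast lt_of_lt_of_le one_pos (by exact_mod_cast hh k hk)
  have Spos : ∀ r : ℕ, 0 < ∏ k ∈ Finset.Icc 1 r, H k := fun r =>
    Finset.prod_pos fun i hi => Hpos i (Finset.mem_Icc.mp hi).1
  have Sint : ∀ r : ℕ, (∏ k ∈ Finset.Icc 1 r, H k) = ((∏ k ∈ Finset.Icc 1 r, h k : ℤ) : ℚ) := by
    intro r; simp [hH]
  intro n
  induction n using Nat.strong_induction_on with
  | _ n IH =>
    match n with
    | 0 =>
      intro m
      refine ⟨fun hm hmn => absurd (hm.trans hmn) (by norm_num), ?_⟩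
      rintro (⟨rfl, h1⟩ | hlt)
      · exact absurd h1 (by norm_num)
      · show (HVP G H 0).coeff m = 0
        rw [HVP, Polynomial.coeff_one, if_neg (by omega)]
    | (n + 1) =>
      intro m
      have hE : HVP G H (n + 1) = Polynomial.C (H (n + 1))⁻¹ * Polynomial.X *
          ∑ k ∈ (Finset.Icc 1 (n + 1)).attach,
            Polynomial.C (G k.1) * HVP G H (n + 1 - k.1) := by rw [HVP]
      match m with
      | 0 =>
        refine ⟨fun hm _ => absurd hm (by norm_num), fun _ => ?_⟩
        rw [hE, mul_assoc, Polynomial.coeff_C_mul, Polynomial.mul_coeff_zero]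
        simp
      | (j + 1) =>
        have hc : (HVP G H (n + 1)).coeff (j + 1) =
            (H (n + 1))⁻¹ * ∑ k ∈ (Finset.Icc 1 (n + 1)).attach,
              G k.1 * (HVP G H (n + 1 - k.1)).coeff j := by
          rw [hE, mul_assoc, Polynomial.coeff_C_mul, Polynomial.coeff_X_mul,
            Polynomial.finset_sum_coeff]
          simp_rw [Polynomial.coeff_C_mul]
        constructor
        · -- positive integer part
          intro _ hmn
          have hj : j ≤ n := by omega
          have hSrec : (∏ k ∈ Finset.Icc 1 (n + 1), H k) * (H (n + 1))⁻¹ =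
              ∏ k ∈ Finset.Icc 1 n, H k := by
            rw [Finset.prod_Icc_succ_top (by omega : 1 ≤ n + 1)]
            field_simp [(Hpos (n + 1) (by omega)).ne']
          have hval : (∏ k ∈ Finset.Icc 1 (n + 1), H k) * (HVP G H (n + 1)).coeff (j + 1) =
              ∑ k ∈ (Finset.Icc 1 (n + 1)).attach,
                (∏ i ∈ Finset.Icc 1 n, H i) * (G k.1 * (HVP G H (n + 1 - k.1)).coeff j) := by
            rw [hc, ← mul_assoc, hSrec, Finset.mul_sum]
          -- per-term analysis
          have TERM : ∀ k : {x // x ∈ Finset.Icc 1 (n + 1)},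
              ∃ z : ℤ, 0 ≤ z ∧
                (∏ i ∈ Finset.Icc 1 n, H i) * (G k.1 * (HVP G H (n + 1 - k.1)).coeff j)
                  = (z : ℚ) := by
            intro k
            obtain ⟨hk1, hk2⟩ := Finset.mem_Icc.mp k.2
            set r := n + 1 - k.1 with hr
            have hrn : r ≤ n := by omega
            have hsplit : (∏ i ∈ Finset.Icc 1 n, H i) =
                (∏ i ∈ Finset.Icc 1 r, H i) * ∏ i ∈ Finset.Ioc r n, H i := by
              have e : ∀ x : ℕ, Finset.Icc 1 x = Finset.Ioc 0 x := fun x => by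
                rw [← Finset.Icc_add_one_left_eq_Ioc, zero_add]
              rw [e, e]
              exact (Finset.prod_Ioc_consecutive H (Nat.zero_le r) hrn).symm
            rcases Nat.eq_zero_or_pos j with rfl | hj1
            · rcases Nat.eq_zero_or_pos r with hr0 | hr1
              · -- r = 0 : coefficient is 1
                refine ⟨(∏ i ∈ Finset.Icc 1 n, h i) * g k.1, ?_, ?_⟩
                · have p1 : (0:ℤ) < ∏ i ∈ Finset.Icc 1 n, h i :=
                    Finset.prod_pos fun i hi => by
                      have := hh i (Finset.mem_Icc.mp hi).1; omega
                  have p2 : (0:ℤ) < g k.1 := by have := hg k.1 hk1; omega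
                  exact (mul_pos p1 p2).le
                · rw [hr0]
                  show (∏ i ∈ Finset.Icc 1 n, H i) * (G k.1 * (HVP G H 0).coeff 0) = _
                  rw [HVP, Polynomial.coeff_one, if_pos rfl, mul_one, Sint]
                  have gc : ((g k.1 : ℤ) : ℚ) = G k.1 := rfl
                  rw [Int.cast_mul, gc]
              · -- r ≥ 1 : coeff 0 = 0
                have := ((IH r (by omega)) 0).2 (Or.inl ⟨rfl, hr1⟩)
                exact ⟨0, le_refl 0, by rw [this]; simp⟩
            · rcases le_or_gt j r with hjr | hjr
              · obtain ⟨z, hz, hzeq⟩ := ((IH r (by omega)) j).1 hj1 hjr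
                refine ⟨g k.1 * (∏ i ∈ Finset.Ioc r n, h i) * z, ?_, ?_⟩
                · have p1 : (0:ℤ) < ∏ i ∈ Finset.Ioc r n, h i :=
                    Finset.prod_pos fun i hi => lt_of_lt_of_le one_pos
                      (hh i (by have := (Finset.mem_Ioc.mp hi).1; omega))
                  have p2 : (0:ℤ) < g k.1 := by have := hg k.1 hk1; omega
                  positivity
                · rw [hsplit]
                  have pc : ((∏ i ∈ Finset.Ioc r n, h i : ℤ) : ℚ) =
                      ∏ i ∈ Finset.Ioc r n, H i := by simp [hH]
                  have gc : ((g k.1 : ℤ) : ℚ) = G k.1 := rfl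
                  rw [Int.cast_mul, Int.cast_mul, pc, gc, ← hzeq]
                  ring
              · have := ((IH r (by omega)) j).2 (Or.inr hjr)
                exact ⟨0, le_refl 0, by rw [this]; simp⟩
          choose zf hzf1 hzf2 using TERM
          have POS : ∃ k ∈ (Finset.Icc 1 (n + 1)).attach,
              0 < (∏ i ∈ Finset.Icc 1 n, H i) * (G k.1 * (HVP G H (n + 1 - k.1)).coeff j) := by
            rcases Nat.eq_zero_or_pos j with rfl | hj1
            · refine ⟨⟨n + 1, Finset.mem_Icc.mpr ⟨by omega, le_refl _⟩⟩,
                Finset.mem_attach _ _, ?_⟩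
              show 0 < (∏ i ∈ Finset.Icc 1 n, H i) * (G (n+1) * (HVP G H (n+1-(n+1))).coeff 0)
              have hGpos : (0:ℚ) < G (n + 1) := by
                simp only [hG]; exact_mod_cast lt_of_lt_of_le one_pos
                  (by exact_mod_cast hg (n+1) (by omega))
              rw [Nat.sub_self, HVP, Polynomial.coeff_one, if_pos rfl, mul_one]
              exact mul_pos (Spos n) hGpos
            · refine ⟨⟨1, Finset.mem_Icc.mpr ⟨le_refl _, by omega⟩⟩, Finset.mem_attach _ _, ?_⟩
              show 0 < (∏ i ∈ Finset.Icc 1 n, H i) * (G 1 * (HVP G H (n+1-1)).coeff j)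
              have hn1 : n + 1 - 1 = n := by omega
              rw [hn1]
              obtain ⟨z, hz, hzeq⟩ := ((IH n (by omega)) j).1 hj1 hj
              have hzq : (0:ℚ) < z := by exact_mod_cast hz
              have hG1 : (0:ℚ) < G 1 := by
                simp only [hG]; exact_mod_cast lt_of_lt_of_le one_pos
                  (by exact_mod_cast hg 1 (le_refl _))
              calc (0:ℚ) < G 1 * ((∏ i ∈ Finset.Icc 1 n, H i) * (HVP G H n).coeff j) := by
                    rw [hzeq]; exact mul_pos hG1 hzq
                _ = (∏ i ∈ Finset.Icc 1 n, H i) * (G 1 * (HVP G H n).coeff j) := by ring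
          refine ⟨∑ k ∈ (Finset.Icc 1 (n + 1)).attach, zf k, ?_, ?_⟩
          · have hsum : (0:ℚ) < ∑ k ∈ (Finset.Icc 1 (n + 1)).attach,
                (∏ i ∈ Finset.Icc 1 n, H i) * (G k.1 * (HVP G H (n + 1 - k.1)).coeff j) := by
              refine Finset.sum_pos' (fun k _ => ?_) POS
              rw [hzf2 k]; exact_mod_cast hzf1 k
            have : (0:ℚ) < ((∑ k ∈ (Finset.Icc 1 (n + 1)).attach, zf k : ℤ) : ℚ) := by
              rw [Int.cast_sum]
              calc (0:ℚ) < _ := hsum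
                _ = _ := Finset.sum_congr rfl fun k _ => hzf2 k
            exact_mod_cast this
          · rw [hval, Int.cast_sum]
            exact Finset.sum_congr rfl fun k _ => hzf2 k
        · -- zero part
          rintro (⟨habs, _⟩ | hlt)
          · exact absurd habs (by omega)
          · rw [hc]
            have : ∀ k ∈ (Finset.Icc 1 (n + 1)).attach,
                G k.1 * (HVP G H (n + 1 - k.1)).coeff j = 0 := by
              intro k _
              obtain ⟨hk1, hk2⟩ := Finset.mem_Icc.mp k.2
              have := ((IH (n + 1 - k.1) (by omega)) j).2 (Or.inr (by omega))
              rw [this, mul_zero]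
            rw [Finset.sum_congr rfl this]
            simp

/-- If `g, h` take positive integer values (with `g(1) = h(1) = 1`), then
`(∏_{k=1}^n h(k)) · A_{n,m}^{g,h}` is a positive integer for all `1 ≤ m ≤ n`. -/
theorem prod_h_mul_A_is_posInt (g h : ℕ → ℤ) (hg1 : g 1 = 1) (hh1 : h 1 = 1)
    (hg : ∀ n, 1 ≤ n → 1 ≤ g n) (hh : ∀ n, 1 ≤ n → 1 ≤ h n)
    (n m : ℕ) (hm : 1 ≤ m) (hmn : m ≤ n) :
    ∃ z : ℤ, 0 < z ∧
      (∏ k ∈ Finset.Icc 1 n, (h k : ℚ)) *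
          (HVP (fun k => (g k : ℚ)) (fun k => (h k : ℚ)) n).coeff m = (z : ℚ) := by
  exact (HVP_key g h hg hh n m).1 hm hmn
end
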